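/- arXiv:1709.05674 — 3 statements merged into one kernel-verified Lean document; each statement's English description precedes it below -/
import Mathlib

section
/- Fix an integer k with 1 ≤ k ≤ n−1. The family of polynomials m_I^{(l)} ∈ A, indexed by all strictly increasing k-tuples I = (i_1 < … < i_k) with entries in {1,…,n} and all integers l ≥ 0, is linearly independent over K. -/
namespace SemiInf

/-- The minor `m_I(s)`: the determinant of the `k × k` matrix of power series whose
`(a,b)` entry is `z_{a, I b}`, on rows `0, …, k-1` and columns `I 0, …, I (k-1)`. -/
noncomputable def minor {R : Type*} [CommRing R] {n : ℕ} (z : ℕ → Fin n → PowerSeries R)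
    (k : ℕ) (I : Fin k → Fin n) : PowerSeries R :=
  Matrix.det (Matrix.of fun a b : Fin k => z (a : ℕ) (I b))

/-- The polynomial ring `A = K[z_{i,j}^{(l)} : 0 ≤ i,j < n, l ≥ 0]`. -/
abbrev MinorAlgebra (K : Type*) [CommRing K] (n : ℕ) : Type _ :=
  MvPolynomial (Fin n × Fin n × ℕ) K

/-- The generating series `z_{i,j}(s) = ∑_{l ≥ 0} z_{i,j}^{(l)} s^l ∈ A⟦s⟧`
(extended by zero for row indices `i ≥ n`; only rows `i < n` are ever used). -/
noncomputable def zGen (K : Type*) [CommRing K] (n : ℕ) :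
    ℕ → Fin n → PowerSeries (MinorAlgebra K n) :=
  fun i j =>
    if h : i < n then PowerSeries.mk (fun l => MvPolynomial.X (⟨i, h⟩, j, l)) else 0

open Finset MvPolynomial

lemma prod_X_eq_monomial' {σ R : Type*} [CommSemiring R] {ι : Type*} (s : Finset ι) (f : ι → σ) :
    (∏ a ∈ s, (X (f a) : MvPolynomial σ R)) =
      monomial (∑ a ∈ s, Finsupp.single (f a) 1) 1 := by
  classical
  induction s using Finset.cons_induction with
  | empty => simp
  | cons a s h ih =>
      rw [Finset.prod_cons, Finset.sum_cons, ih, ← pow_one (X (f a)), X_pow_eq_monomial,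
        monomial_mul, one_mul]

lemma sum_single_apply_inj {α : Type*} [DecidableEq α] {k : ℕ} (F : Fin k → α)
    (hF : Function.Injective F) (x : α) :
    (∑ a : Fin k, Finsupp.single (F a) 1 : α →₀ ℕ) x =
      if x ∈ Set.range F then 1 else 0 := by
  rw [Finset.sum_apply']
  by_cases h : x ∈ Set.range F
  · obtain ⟨c, rfl⟩ := h
    rw [if_pos ⟨c, rfl⟩, Finset.sum_eq_single c]
    · simp
    · intro b _ hb
      rw [Finsupp.single_apply, if_neg (fun he => hb (hF he))]
    · simp
  · rw [if_neg h]
    refine Finset.sum_eq_zero fun a _ => ?_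
    rw [Finsupp.single_apply, if_neg (fun he => h ⟨a, he⟩)]

section Key

variable (K : Type*) [Field K] {n k : ℕ}

/-- The combinatorial heart: equality of the exponent finsupps forces everything. -/
lemma exponent_eq_iff (hk1 : 1 ≤ k) (hkn : k < n)
    (I J : Fin k → Fin n) (hI : StrictMono I) (hJ : StrictMono J) (l l' : ℕ)
    (σ : Equiv.Perm (Fin k)) (d : Fin k →₀ ℕ) (hd : (univ : Finset (Fin k)).sum d = l') :
    (∑ a : Fin k, Finsupp.single
        ((Fin.castLE hkn.le (σ a) : Fin n), J a, d a) (1 : ℕ)) =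
      (∑ a : Fin k, Finsupp.single
        ((Fin.castLE hkn.le a : Fin n), I a, if (a : ℕ) = 0 then l else 0) (1 : ℕ)) ↔
    (J = I ∧ l' = l ∧ σ = 1 ∧ d = Finsupp.single (⟨0, hk1⟩ : Fin k) l) := by
  classical
  set F : Fin k → Fin n × Fin n × ℕ :=
    fun a => ((Fin.castLE hkn.le a : Fin n), I a, if (a : ℕ) = 0 then l else 0) with hF
  set G : Fin k → Fin n × Fin n × ℕ :=
    fun a => ((Fin.castLE hkn.le (σ a) : Fin n), J a, d a) with hG
  have hFinj : Function.Injective F := by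
    intro a b hab
    have := congrArg Prod.fst hab
    simpa [F, Fin.ext_iff] using this
  have hGinj : Function.Injective G := by
    intro a b hab
    have h1 : (Fin.castLE hkn.le (σ a) : Fin n) = Fin.castLE hkn.le (σ b) :=
      congrArg Prod.fst hab
    exact σ.injective (Fin.castLE_injective hkn.le h1)
  constructor
  · intro h
    -- for each b, G b is in the range of F, and the witness is σ b
    have hGF : ∀ b, F (σ b) = G b := by
      intro b
      have h1 : (∑ a : Fin k, Finsupp.single (F a) 1 : _ →₀ ℕ) (G b) = 1 := by
        rw [← h, sum_single_apply_inj G hGinj, if_pos ⟨b, rfl⟩]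
      rw [sum_single_apply_inj F hFinj] at h1
      have h2 : G b ∈ Set.range F := by
        by_contra hc
        rw [if_neg hc] at h1; exact one_ne_zero h1.symm
      obtain ⟨c, hc⟩ := h2
      have hcb : c = σ b := by
        have := congrArg Prod.fst hc
        simpa [F, G, Fin.ext_iff] using this
      rw [← hcb]; exact hc
    have hJIσ : ∀ b, J b = I (σ b) := fun b => by
      have := congrArg (fun x => x.2.1) (hGF b); simpa [F, G] using this.symm
    have hrange : Set.range J = Set.range I := by
      have : J = I ∘ σ := funext hJIσ
      rw [this, Set.range_comp, σ.surjective.range_eq, Set.image_univ]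
    haveI : WellFoundedLT (Fin k) := Finite.to_wellFoundedLT
    have hJI : J = I := (hJ.range_inj hI).1 hrange
    have hσ : σ = 1 := by
      refine Equiv.ext fun b => ?_
      have h1 := hJIσ b
      rw [hJI] at h1
      exact (hI.injective h1).symm
    have hdval : ∀ b, d b = if (b : ℕ) = 0 then l else 0 := by
      intro b
      have := congrArg (fun x => x.2.2) (hGF b)
      rw [hσ] at this
      convert this.symm using 1
      simp only [F, Equiv.Perm.one_apply]
      split_ifs <;> simp_all
    have hd0 : d = Finsupp.single (⟨0, hk1⟩ : Fin k) l := by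
      ext b
      rw [hdval b, Finsupp.single_apply]
      congr 1
      simp [Fin.ext_iff, eq_comm]
    have hl' : l' = l := by
      rw [← hd]
      rw [hd0]
      rw [Finset.sum_congr rfl (fun b _ => Finsupp.single_apply)]
      simp
    exact ⟨hJI, hl', hσ, hd0⟩
  · rintro ⟨rfl, rfl, rfl, rfl⟩
    refine Finset.sum_congr rfl fun a _ => ?_
    have hda : (Finsupp.single (⟨0, hk1⟩ : Fin k) l') a = if (a : ℕ) = 0 then l' else 0 := by
      rw [Finsupp.single_apply]
      congr 1
      simp [Fin.ext_iff, eq_comm]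
    simp only [Equiv.Perm.one_apply, hda]

/-- Coefficient of the distinguished monomial in a minor coefficient. -/
lemma key (hk1 : 1 ≤ k) (hkn : k < n)
    (I J : Fin k → Fin n) (hI : StrictMono I) (hJ : StrictMono J) (l l' : ℕ) :
    MvPolynomial.coeff
        (∑ a : Fin k, Finsupp.single
          ((Fin.castLE hkn.le a : Fin n), I a, if (a : ℕ) = 0 then l else 0) (1 : ℕ))
        (PowerSeries.coeff l' (minor (zGen K n) k J)) =
      if J = I ∧ l' = l then 1 else 0 := by
  classical
  set D : (Fin n × Fin n × ℕ) →₀ ℕ :=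
    ∑ a : Fin k, Finsupp.single
      ((Fin.castLE hkn.le a : Fin n), I a, if (a : ℕ) = 0 then l else 0) (1 : ℕ) with hD
  have hM : ∀ (a b : Fin k),
      (Matrix.of fun a b : Fin k => zGen K n (a : ℕ) (J b)) a b =
        PowerSeries.mk (fun m => (X ((Fin.castLE hkn.le a : Fin n), J b, m) :
          MinorAlgebra K n)) := by
    intro a b
    have ha : (a : ℕ) < n := lt_of_lt_of_le a.isLt hkn.le
    simp only [Matrix.of_apply, zGen, dif_pos ha]
    rfl
  rw [minor, Matrix.det_apply]
  rw [map_sum]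
  rw [MvPolynomial.coeff_sum]
  have step : ∀ σ : Equiv.Perm (Fin k),
      MvPolynomial.coeff D (PowerSeries.coeff l'
        (Equiv.Perm.sign σ • ∏ a, (Matrix.of fun a b : Fin k => zGen K n (a : ℕ) (J b)) (σ a) a)) =
      ∑ d ∈ Finset.finsuppAntidiag (univ : Finset (Fin k)) l',
        if (J = I ∧ l' = l ∧ σ = 1 ∧ d = Finsupp.single (⟨0, hk1⟩ : Fin k) l)
          then (1 : K) else 0 := by
    intro σ
    rw [Units.smul_def, map_zsmul, MvPolynomial.coeff_smul]
    have hprod : (∏ a, (Matrix.of fun a b : Fin k => zGen K n (a : ℕ) (J b)) (σ a) a) =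
        ∏ a, PowerSeries.mk (fun m => (X ((Fin.castLE hkn.le (σ a) : Fin n), J a, m) :
          MinorAlgebra K n)) := by
      refine Finset.prod_congr rfl fun a _ => hM (σ a) a
    rw [hprod, PowerSeries.coeff_prod, MvPolynomial.coeff_sum]
    rw [Finset.smul_sum]
    refine Finset.sum_congr rfl fun d hd => ?_
    have hdmem := (Finset.mem_finsuppAntidiag.mp hd).1
    simp only [PowerSeries.coeff_mk]
    rw [prod_X_eq_monomial', MvPolynomial.coeff_monomial]
    rw [hD]
    simp only [exponent_eq_iff hk1 hkn I J hI hJ l l' σ d hdmem]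
    by_cases hc : J = I ∧ l' = l ∧ σ = 1 ∧ d = Finsupp.single (⟨0, hk1⟩ : Fin k) l
    · rw [if_pos hc, hc.2.2.1]
      simp
    · rw [if_neg hc, smul_zero]
  rw [Finset.sum_congr rfl fun σ _ => step σ]
  by_cases hP : J = I ∧ l' = l
  · obtain ⟨rfl, rfl⟩ := hP
    rw [if_pos ⟨rfl, rfl⟩]
    have hmem : (Finsupp.single (⟨0, hk1⟩ : Fin k) l') ∈
        Finset.finsuppAntidiag (univ : Finset (Fin k)) l' := by
      rw [Finset.mem_finsuppAntidiag]
      constructor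
      · rw [Finset.sum_congr rfl (fun b _ => Finsupp.single_apply)]
        simp
      · exact Finset.subset_univ _
    rw [Finset.sum_eq_single (1 : Equiv.Perm (Fin k))]
    · rw [Finset.sum_eq_single (Finsupp.single (⟨0, hk1⟩ : Fin k) l')]
      · simp
      · intro d _ hne
        rw [if_neg (by tauto)]
      · intro h; exact absurd hmem h
    · intro σ _ hσ
      refine Finset.sum_eq_zero fun d _ => ?_
      rw [if_neg (by tauto)]
    · intro h; exact absurd (Finset.mem_univ _) h
  · rw [if_neg hP]
    refine Finset.sum_eq_zero fun σ _ => Finset.sum_eq_zero fun d _ => ?_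
    rw [if_neg (by tauto)]

end Key

/-- **Linear independence of the coefficients of minors** (part of Proposition
`fundamentalasminors`): for a fixed `1 ≤ k ≤ n - 1`, the elements `m_I^{(l)} ∈ A`
(coefficient of `s^l` in the minor `m_I(s)` on the first `k` rows and columns indexed
by the strictly increasing `k`-tuple `I`), for all such `I` and all `l ≥ 0`, are
linearly independent over `K`. -/
theorem minor_coefficients_linearIndependent
    (K : Type*) [Field K] [IsAlgClosed K] [CharZero K] (n : ℕ) (hn : 2 ≤ n)
    (k : ℕ) (hk1 : 1 ≤ k) (hk2 : k ≤ n - 1) :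
    LinearIndependent K
      (fun p : {I : Fin k → Fin n // StrictMono I} × ℕ =>
        PowerSeries.coeff p.2 (minor (zGen K n) k p.1.1)) := by
  classical
  have hkn : k < n := by omega
  rw [linearIndependent_iff]
  intro c hc
  ext ⟨⟨I, hI⟩, l⟩
  set p : {I : Fin k → Fin n // StrictMono I} × ℕ := ⟨⟨I, hI⟩, l⟩ with hp
  set D : (Fin n × Fin n × ℕ) →₀ ℕ :=
    ∑ a : Fin k, Finsupp.single
      ((Fin.castLE hkn.le a : Fin n), I a, if (a : ℕ) = 0 then l else 0) (1 : ℕ) with hD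
  have h1 : ∀ q : {I : Fin k → Fin n // StrictMono I} × ℕ,
      MvPolynomial.coeff D
        (PowerSeries.coeff q.2 (minor (zGen K n) k q.1.1)) =
      if q = p then (1 : K) else 0 := by
    rintro ⟨⟨J, hJ⟩, l'⟩
    rw [key K hk1 hkn I J hI hJ l l']
    have hiff : (J = I ∧ l' = l) ↔
        ((⟨⟨J, hJ⟩, l'⟩ : {I : Fin k → Fin n // StrictMono I} × ℕ) = p) := by
      simp [hp, Prod.ext_iff, Subtype.ext_iff]
    simp only [hiff]
  have h0 := congrArg (MvPolynomial.coeff D) hc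
  rw [Finsupp.linearCombination_apply, Finsupp.sum, MvPolynomial.coeff_sum] at h0
  simp only [MvPolynomial.coeff_smul, h1, MvPolynomial.coeff_zero, smul_eq_mul,
    mul_ite, mul_one, mul_zero, Finset.sum_ite_eq'] at h0
  by_cases hmem : p ∈ c.support
  · rw [if_pos hmem] at h0
    simpa using h0
  · simpa using Finsupp.notMem_support_iff.mp hmem

end SemiInf
end

section
/- Fix k_1, k_2 ∈ {1,…,n−1} and scalars c_{I,J} ∈ K, indexed by pairs of strictly increasing tuples I of length k_1 and J of length k_2 with entries in {1,…,n}. If the relation ∑_{I,J} c_{I,J} · m_I^{(0)} · m_J^{(0)} = 0 holds in A, then the relation ∑_{I,J} c_{I,J} · m_I(s) · m_J(s) = 0 holds in A⟦s⟧ (equivalently, ∑_{I,J} c_{I,J} ∑_{a+b=N} m_I^{(a)} m_J^{(b)} = 0 in A for every N ≥ 0). -/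
namespace SemiInf

noncomputable instance {k n : ℕ} : Fintype {I : Fin k → Fin n // StrictMono I} :=
  Fintype.ofInjective (fun I => (I.1 : Fin k → Fin n)) Subtype.val_injective

/-- The generic determinant: minor as a polynomial in generic matrix variables. -/
noncomputable def genDet (K : Type*) [CommRing K] {n k : ℕ} (row : Fin k → Fin n)
    (I : Fin k → Fin n) : MvPolynomial (Fin n × Fin n) K :=
  Matrix.det (Matrix.of fun a b : Fin k => MvPolynomial.X (row a, I b))

/-- **Classical Plücker-type relations propagate to generating series** (Proposition
`classicaltosemiinfrelations`): if a quadratic relation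
`∑_{I,J} c_{I,J} m_I^{(0)} m_J^{(0)} = 0` holds among the constant terms of the minors,
then `∑_{I,J} c_{I,J} m_I(s) m_J(s) = 0` holds in `A⟦s⟧`. -/
theorem constant_relation_propagates
    (K : Type*) [Field K] [IsAlgClosed K] [CharZero K] (n : ℕ) (hn : 2 ≤ n)
    (k₁ k₂ : ℕ) (hk₁ : 1 ≤ k₁) (hk₁' : k₁ ≤ n - 1) (hk₂ : 1 ≤ k₂) (hk₂' : k₂ ≤ n - 1)
    (c : {I : Fin k₁ → Fin n // StrictMono I} → {J : Fin k₂ → Fin n // StrictMono J} → K)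
    (h0 : ∑ I : {I : Fin k₁ → Fin n // StrictMono I},
            ∑ J : {J : Fin k₂ → Fin n // StrictMono J},
              c I J •
                (PowerSeries.coeff (R := MinorAlgebra K n) 0 (minor (zGen K n) k₁ I.1) *
                  PowerSeries.coeff (R := MinorAlgebra K n) 0 (minor (zGen K n) k₂ J.1)) = 0) :
    ∑ I : {I : Fin k₁ → Fin n // StrictMono I},
      ∑ J : {J : Fin k₂ → Fin n // StrictMono J},
        c I J • (minor (zGen K n) k₁ I.1 * minor (zGen K n) k₂ J.1) = 0 := by
  classical
  -- the two evaluation maps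
  set φ : MvPolynomial (Fin n × Fin n) K →ₐ[K] MinorAlgebra K n :=
    MvPolynomial.aeval (fun p : Fin n × Fin n => MvPolynomial.X (p.1, p.2, 0)) with hφ
  set ψ : MvPolynomial (Fin n × Fin n) K →ₐ[K] PowerSeries (MinorAlgebra K n) :=
    MvPolynomial.aeval (fun p : Fin n × Fin n => zGen K n p.1 p.2) with hψdef
  -- rows
  have hr₁ : ∀ a : Fin k₁, (a : ℕ) < n := fun a => by have := a.isLt; omega
  have hr₂ : ∀ a : Fin k₂, (a : ℕ) < n := fun a => by have := a.isLt; omega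
  set row₁ : Fin k₁ → Fin n := fun a => ⟨a, hr₁ a⟩ with hrow₁
  set row₂ : Fin k₂ → Fin n := fun a => ⟨a, hr₂ a⟩ with hrow₂
  -- minors come from generic determinants via ψ
  have key : ∀ (k : ℕ) (row : Fin k → Fin n), (∀ a, (row a : ℕ) = (a : ℕ)) →
      ∀ I : Fin k → Fin n, minor (zGen K n) k I = ψ (genDet K row I) := by
    intro k row hrow I
    have hM : (Matrix.of fun a b : Fin k => zGen K n (a : ℕ) (I b)) =
        (Matrix.of fun a b : Fin k => (MvPolynomial.X (row a, I b) :
          MvPolynomial (Fin n × Fin n) K)).map ψ := by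
      ext a b
      simp [Matrix.map_apply, hψdef, MvPolynomial.aeval_X, hrow a]
    rw [minor, hM, genDet]
    exact (RingHom.map_det ψ.toRingHom _).symm
  -- constant coefficients of minors come from generic determinants via φ
  have keyC : ∀ (k : ℕ) (row : Fin k → Fin n), (∀ a, (row a : ℕ) = (a : ℕ)) →
      ∀ I : Fin k → Fin n,
        PowerSeries.coeff (R := MinorAlgebra K n) 0 (minor (zGen K n) k I) = φ (genDet K row I) := by
    intro k row hrow I
    rw [PowerSeries.coeff_zero_eq_constantCoeff, minor,
      RingHom.map_det (PowerSeries.constantCoeff (R := MinorAlgebra K n)) _, genDet]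
    rw [show φ (Matrix.det (Matrix.of fun a b : Fin k =>
        (MvPolynomial.X (row a, I b) : MvPolynomial (Fin n × Fin n) K))) =
        Matrix.det ((Matrix.of fun a b : Fin k =>
        (MvPolynomial.X (row a, I b) : MvPolynomial (Fin n × Fin n) K)).map φ) from
      RingHom.map_det φ.toRingHom _]
    congr 1
    ext a b
    have ha : (a : ℕ) < n := hrow a ▸ (row a).isLt
    have hrowa : row a = ⟨(a : ℕ), ha⟩ := Fin.ext (hrow a)
    simp [Matrix.map_apply, hφ, MvPolynomial.aeval_X, zGen, ha, hrowa]
  -- the global polynomial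
  set P : MvPolynomial (Fin n × Fin n) K :=
    ∑ I : {I : Fin k₁ → Fin n // StrictMono I},
      ∑ J : {J : Fin k₂ → Fin n // StrictMono J},
        c I J • (genDet K row₁ I.1 * genDet K row₂ J.1) with hP
  have hrow₁' : ∀ a : Fin k₁, (row₁ a : ℕ) = (a : ℕ) := fun a => rfl
  have hrow₂' : ∀ a : Fin k₂, (row₂ a : ℕ) = (a : ℕ) := fun a => rfl
  have hφP : φ P = 0 := by
    rw [hP, map_sum]
    rw [← h0]
    refine Finset.sum_congr rfl fun I _ => ?_
    rw [map_sum]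
    refine Finset.sum_congr rfl fun J _ => ?_
    rw [map_smul, map_mul, ← keyC k₁ row₁ hrow₁' I.1, ← keyC k₂ row₂ hrow₂' J.1]
  have hinj : Function.Injective φ := by
    have : φ = (MvPolynomial.rename (fun p : Fin n × Fin n => (p.1, p.2, 0)) :
        MvPolynomial (Fin n × Fin n) K →ₐ[K] MinorAlgebra K n) := by
      apply MvPolynomial.algHom_ext
      intro p
      simp [hφ]
    rw [this]
    exact MvPolynomial.rename_injective _ (fun p q h => by
      simpa [Prod.ext_iff] using h)
  have hP0 : P = 0 := hinj (by rw [hφP, map_zero])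
  calc ∑ I : {I : Fin k₁ → Fin n // StrictMono I},
      ∑ J : {J : Fin k₂ → Fin n // StrictMono J},
        c I J • (minor (zGen K n) k₁ I.1 * minor (zGen K n) k₂ J.1)
      = ψ P := by
        rw [hP, map_sum]
        refine Finset.sum_congr rfl fun I _ => ?_
        rw [map_sum]
        refine Finset.sum_congr rfl fun J _ => ?_
        rw [map_smul, map_mul, key k₁ row₁ hrow₁' I.1, key k₂ row₂ hrow₂' J.1]
    _ = 0 := by rw [hP0, map_zero]

end SemiInf
end

section
/- Fix integers 1 ≤ k < N. Let B_k be the collection of finite sets B of pairs (p,q) of integers such that every (p,q) ∈ B satisfies 1 ≤ p ≤ k < q ≤ N, and such that for any two distinct pairs (p_1,q_1), (p_2,q_2) ∈ B one has p_1 ≠ p_2, q_1 ≠ q_2, and p_1 < p_2 if and only if q_1 > q_2. Then the map sending B to the set ({1,…,k} ∖ {p : (p,q) ∈ B}) ∪ {q : (p,q) ∈ B} is a bijection from B_k onto the collection of all k-element subsets of {1,…,N}. -/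
open Finset

private lemma ffb_fst_injOn {B : Finset (ℕ × ℕ)}
    (hB : ∀ pq ∈ B, ∀ pq' ∈ B, pq ≠ pq' →
      pq.1 ≠ pq'.1 ∧ pq.2 ≠ pq'.2 ∧ (pq.1 < pq'.1 ↔ pq'.2 < pq.2)) :
    Set.InjOn Prod.fst (B : Set (ℕ × ℕ)) := by
  intro r hr r' hr' h
  by_contra hne
  exact (hB r hr r' hr' hne).1 h

private lemma ffb_snd_injOn {B : Finset (ℕ × ℕ)}
    (hB : ∀ pq ∈ B, ∀ pq' ∈ B, pq ≠ pq' →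
      pq.1 ≠ pq'.1 ∧ pq.2 ≠ pq'.2 ∧ (pq.1 < pq'.1 ↔ pq'.2 < pq.2)) :
    Set.InjOn Prod.snd (B : Set (ℕ × ℕ)) := by
  intro r hr r' hr' h
  by_contra hne
  exact (hB r hr r' hr' hne).2.1 h

/-- Key characterization: membership in `B` is determined by the images of
`Prod.fst` and `Prod.snd` together with a counting condition. -/
private lemma ffb_key_mem {B : Finset (ℕ × ℕ)}
    (hB : ∀ pq ∈ B, ∀ pq' ∈ B, pq ≠ pq' →
      pq.1 ≠ pq'.1 ∧ pq.2 ≠ pq'.2 ∧ (pq.1 < pq'.1 ↔ pq'.2 < pq.2))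
    (p q : ℕ) :
    (p, q) ∈ B ↔ p ∈ B.image Prod.fst ∧ q ∈ B.image Prod.snd ∧
      ((B.image Prod.fst).filter (fun x => x < p)).card
        = ((B.image Prod.snd).filter (fun x => q < x)).card := by
  have hforward : ∀ p q : ℕ, (p, q) ∈ B →
      ((B.image Prod.fst).filter (fun x => x < p)).card
        = ((B.image Prod.snd).filter (fun x => q < x)).card := by
    intro p q hpq
    have h1 : (B.image Prod.fst).filter (fun x => x < p)
        = (B.filter (fun r => r.1 < p)).image Prod.fst := by
      ext x
      simp only [mem_filter, mem_image]
      constructor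
      · rintro ⟨⟨r, hr, rfl⟩, hx⟩; exact ⟨r, ⟨hr, hx⟩, rfl⟩
      · rintro ⟨r, ⟨hr, hx⟩, rfl⟩; exact ⟨⟨r, hr, rfl⟩, hx⟩
    have h2 : (B.image Prod.snd).filter (fun x => q < x)
        = (B.filter (fun r => q < r.2)).image Prod.snd := by
      ext x
      simp only [mem_filter, mem_image]
      constructor
      · rintro ⟨⟨r, hr, rfl⟩, hx⟩; exact ⟨r, ⟨hr, hx⟩, rfl⟩
      · rintro ⟨r, ⟨hr, hx⟩, rfl⟩; exact ⟨⟨r, hr, rfl⟩, hx⟩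
    have h3 : B.filter (fun r => r.1 < p) = B.filter (fun r => q < r.2) := by
      apply filter_congr
      intro r hr
      by_cases hre : r = (p, q)
      · subst hre; simp
      · have := (hB r hr (p, q) hpq hre).2.2
        simpa using this
    rw [h1, h2, h3, Finset.card_image_of_injOn, Finset.card_image_of_injOn]
    · exact (ffb_snd_injOn hB).mono (by exact_mod_cast Finset.filter_subset _ _)
    · exact (ffb_fst_injOn hB).mono (by exact_mod_cast Finset.filter_subset _ _)
  constructor
  · intro hpq
    exact ⟨Finset.mem_image_of_mem _ hpq, Finset.mem_image_of_mem _ hpq, hforward p q hpq⟩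
  · rintro ⟨hp, hq, hcard⟩
    obtain ⟨r, hr, hr1⟩ := Finset.mem_image.mp hp
    have h0 := hforward r.1 r.2 (by simpa using hr)
    rw [hr1] at h0
    have hq2 : r.2 ∈ B.image Prod.snd := Finset.mem_image_of_mem _ hr
    have hcc : ((B.image Prod.snd).filter (fun x => q < x)).card
        = ((B.image Prod.snd).filter (fun x => r.2 < x)).card := by omega
    have hqq : q = r.2 := by
      by_contra hne
      rcases lt_or_gt_of_ne hne with h | h
      · have hss : (B.image Prod.snd).filter (fun x => r.2 < x)
            ⊂ (B.image Prod.snd).filter (fun x => q < x) := by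
          constructor
          · intro x hx
            simp only [mem_filter] at hx ⊢
            exact ⟨hx.1, lt_trans h hx.2⟩
          · intro hsub
            have := hsub (Finset.mem_filter.mpr ⟨hq2, h⟩)
            simp only [mem_filter] at this
            exact lt_irrefl _ this.2
        have := Finset.card_lt_card hss
        omega
      · have hss : (B.image Prod.snd).filter (fun x => q < x)
            ⊂ (B.image Prod.snd).filter (fun x => r.2 < x) := by
          constructor
          · intro x hx
            simp only [mem_filter] at hx ⊢
            exact ⟨hx.1, lt_trans h hx.2⟩
          · intro hsub
            have := hsub (Finset.mem_filter.mpr ⟨hq, h⟩)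
            simp only [mem_filter] at this
            exact lt_irrefl _ this.2
        have := Finset.card_lt_card hss
        omega
    have : (p, q) = r := by
      rw [← hr1, hqq]
    rw [this]; exact hr

/-- **Combinatorial bijection for fundamental representations** (Lemma
`oneplacefilling`): for `1 ≤ k < N`, the map `B ↦ ({1,…,k} \ {p : (p,q) ∈ B}) ∪
{q : (p,q) ∈ B}` is a bijection from the collection of finite sets `B` of pairs
`(p,q)` with `1 ≤ p ≤ k < q ≤ N` such that distinct pairs of `B` have distinct first
entries, distinct second entries, and `p₁ < p₂ ↔ q₁ > q₂`, onto the collection of all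
`k`-element subsets of `{1,…,N}`. -/
theorem fundamental_filling_bijection (k N : ℕ) (hk : 1 ≤ k) (hkN : k < N) :
    Set.BijOn
      (fun B : Finset (ℕ × ℕ) =>
        (Finset.Icc 1 k \ B.image Prod.fst) ∪ B.image Prod.snd)
      {B : Finset (ℕ × ℕ) |
        (∀ pq ∈ B, 1 ≤ pq.1 ∧ pq.1 ≤ k ∧ k < pq.2 ∧ pq.2 ≤ N) ∧
        ∀ pq ∈ B, ∀ pq' ∈ B, pq ≠ pq' →
          pq.1 ≠ pq'.1 ∧ pq.2 ≠ pq'.2 ∧ (pq.1 < pq'.1 ↔ pq'.2 < pq.2)}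
      {S : Finset ℕ | S ⊆ Finset.Icc 1 N ∧ S.card = k} := by
  -- recovering the two images from the resulting set
  have hPrec : ∀ C : Finset (ℕ × ℕ),
      (∀ pq ∈ C, 1 ≤ pq.1 ∧ pq.1 ≤ k ∧ k < pq.2 ∧ pq.2 ≤ N) →
      Finset.Icc 1 k \ ((Finset.Icc 1 k \ C.image Prod.fst) ∪ C.image Prod.snd)
          = C.image Prod.fst ∧
      ((Finset.Icc 1 k \ C.image Prod.fst) ∪ C.image Prod.snd) \ Finset.Icc 1 k
          = C.image Prod.snd := by
    intro C hbdC
    have hc : ∀ x, x ∈ C.image Prod.fst → 1 ≤ x ∧ x ≤ k := by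
      intro x hx
      simp only [mem_image] at hx
      obtain ⟨r, hr, rfl⟩ := hx
      exact ⟨(hbdC r hr).1, (hbdC r hr).2.1⟩
    have hd : ∀ x, x ∈ C.image Prod.snd → ¬ x ≤ k := by
      intro x hx
      simp only [mem_image] at hx
      obtain ⟨r, hr, rfl⟩ := hx
      have := (hbdC r hr).2.2.1; omega
    constructor <;> ext x <;>
      simp only [mem_sdiff, mem_union, mem_Icc] <;>
      · have h1 := hc x; have h2 := hd x; tauto
  refine ⟨?_, ?_, ?_⟩
  · -- MapsTo
    intro B hB
    obtain ⟨hbd, hdist⟩ := hB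
    have hPsub : B.image Prod.fst ⊆ Finset.Icc 1 k := by
      intro x hx
      simp only [mem_image] at hx
      obtain ⟨r, hr, rfl⟩ := hx
      exact Finset.mem_Icc.mpr ⟨(hbd r hr).1, (hbd r hr).2.1⟩
    have hQsub : ∀ x ∈ B.image Prod.snd, k < x ∧ x ≤ N := by
      intro x hx
      simp only [mem_image] at hx
      obtain ⟨r, hr, rfl⟩ := hx
      exact ⟨(hbd r hr).2.2.1, (hbd r hr).2.2.2⟩
    have hPcard : (B.image Prod.fst).card = B.card :=
      Finset.card_image_of_injOn (ffb_fst_injOn hdist)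
    have hQcard : (B.image Prod.snd).card = B.card :=
      Finset.card_image_of_injOn (ffb_snd_injOn hdist)
    constructor
    · intro x hx
      simp only [mem_union, mem_sdiff, mem_Icc] at hx
      rcases hx with ⟨⟨h1, h2⟩, -⟩ | hx
      · exact Finset.mem_Icc.mpr ⟨h1, le_trans h2 (le_of_lt hkN)⟩
      · have := hQsub x hx
        exact Finset.mem_Icc.mpr ⟨by omega, this.2⟩
    · have hdisj : Disjoint (Finset.Icc 1 k \ B.image Prod.fst) (B.image Prod.snd) := by
        rw [Finset.disjoint_left]
        intro x hx hx'
        have h1 := (Finset.mem_Icc.mp (Finset.mem_sdiff.mp hx).1).2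
        have h2 := (hQsub x hx').1
        omega
      rw [Finset.card_union_of_disjoint hdisj,
        Finset.card_sdiff_of_subset hPsub, Nat.card_Icc]
      have hle : (B.image Prod.fst).card ≤ k := by
        have := Finset.card_le_card hPsub
        rwa [Nat.card_Icc] at this
      omega
  · -- InjOn
    intro B hB B' hB' himg
    obtain ⟨hbd, hdist⟩ := hB
    obtain ⟨hbd', hdist'⟩ := hB'
    have himg' : (Finset.Icc 1 k \ B.image Prod.fst) ∪ B.image Prod.snd
        = (Finset.Icc 1 k \ B'.image Prod.fst) ∪ B'.image Prod.snd := himg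
    have e1 := hPrec B hbd
    have e2 := hPrec B' hbd'
    have hPeq : B.image Prod.fst = B'.image Prod.fst := by
      rw [← e1.1, ← e2.1, himg']
    have hQeq : B.image Prod.snd = B'.image Prod.snd := by
      rw [← e1.2, ← e2.2, himg']
    ext r
    have hr : r = (r.1, r.2) := rfl
    rw [hr, ffb_key_mem hdist, ffb_key_mem hdist', hPeq, hQeq]
  · -- SurjOn
    intro S hS
    obtain ⟨hSsub, hScard⟩ := hS
    set P : Finset ℕ := Finset.Icc 1 k \ S with hPdef
    set Q : Finset ℕ := S \ Finset.Icc 1 k with hQdef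
    have h1 := Finset.card_sdiff_add_card_inter (Finset.Icc 1 k) S
    have h2 := Finset.card_sdiff_add_card_inter S (Finset.Icc 1 k)
    rw [Nat.card_Icc] at h1
    rw [hScard, Finset.inter_comm] at h2
    have hQP : Q.card = P.card := by
      rw [hPdef, hQdef]; omega
    set f : Fin P.card → ℕ × ℕ :=
      fun i => (P.orderEmbOfFin rfl i, Q.orderEmbOfFin hQP i.rev) with hfdef
    set B : Finset (ℕ × ℕ) := Finset.image f Finset.univ with hBdef
    have hfst : B.image Prod.fst = P := by
      ext x
      rw [hBdef]
      simp only [Finset.mem_image, Finset.mem_univ, true_and]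
      constructor
      · rintro ⟨y, ⟨i, rfl⟩, rfl⟩
        exact Finset.orderEmbOfFin_mem P rfl i
      · intro hx
        have : x ∈ Set.range (P.orderEmbOfFin rfl) := by
          rw [Finset.range_orderEmbOfFin]; exact_mod_cast hx
        obtain ⟨i, hi⟩ := this
        exact ⟨f i, ⟨i, rfl⟩, hi⟩
    have hsnd : B.image Prod.snd = Q := by
      ext x
      rw [hBdef]
      simp only [Finset.mem_image, Finset.mem_univ, true_and]
      constructor
      · rintro ⟨y, ⟨i, rfl⟩, rfl⟩
        exact Finset.orderEmbOfFin_mem Q hQP i.rev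
      · intro hx
        have : x ∈ Set.range (Q.orderEmbOfFin hQP) := by
          rw [Finset.range_orderEmbOfFin]; exact_mod_cast hx
        obtain ⟨i, hi⟩ := this
        refine ⟨f i.rev, ⟨i.rev, rfl⟩, ?_⟩
        simp only [hfdef, Fin.rev_rev]
        exact hi
    have hPmem : ∀ x ∈ P, 1 ≤ x ∧ x ≤ k := by
      intro x hx
      rw [hPdef] at hx
      have := (Finset.mem_sdiff.mp hx).1
      exact Finset.mem_Icc.mp this
    have hQmem : ∀ x ∈ Q, k < x ∧ x ≤ N := by
      intro x hx
      rw [hQdef] at hx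
      obtain ⟨hxS, hxI⟩ := Finset.mem_sdiff.mp hx
      have hb := Finset.mem_Icc.mp (hSsub hxS)
      rw [Finset.mem_Icc] at hxI
      push_neg at hxI
      exact ⟨hxI hb.1, hb.2⟩
    refine ⟨B, ⟨?_, ?_⟩, ?_⟩
    · -- bounds
      intro pq hpq
      rw [hBdef] at hpq
      simp only [Finset.mem_image, Finset.mem_univ, true_and] at hpq
      obtain ⟨i, rfl⟩ := hpq
      have hp := hPmem _ (Finset.orderEmbOfFin_mem P rfl i)
      have hq := hQmem _ (Finset.orderEmbOfFin_mem Q hQP i.rev)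
      exact ⟨hp.1, hp.2, hq.1, hq.2⟩
    · -- distinctness / order reversal
      intro pq h1 pq' h2 hne
      rw [hBdef] at h1 h2
      simp only [Finset.mem_image, Finset.mem_univ, true_and] at h1 h2
      obtain ⟨i, rfl⟩ := h1
      obtain ⟨j, rfl⟩ := h2
      have hij : i ≠ j := by rintro rfl; exact hne rfl
      refine ⟨?_, ?_, ?_⟩
      · intro h
        exact hij ((P.orderEmbOfFin rfl).injective h)
      · intro h
        exact hij (Fin.rev_injective ((Q.orderEmbOfFin hQP).injective h))
      · constructor
        · intro h
          have hlt : i < j := (P.orderEmbOfFin rfl).lt_iff_lt.mp h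
          have : j.rev < i.rev := Fin.rev_lt_rev.mpr hlt
          exact (Q.orderEmbOfFin hQP).lt_iff_lt.mpr this
        · intro h
          have : j.rev < i.rev := (Q.orderEmbOfFin hQP).lt_iff_lt.mp h
          have hlt : i < j := Fin.rev_lt_rev.mp this
          exact (P.orderEmbOfFin rfl).lt_iff_lt.mpr hlt
    · -- the image is S
      show (Finset.Icc 1 k \ B.image Prod.fst) ∪ B.image Prod.snd = S
      rw [hfst, hsnd, hPdef, hQdef]
      ext x
      simp only [mem_union, mem_sdiff, mem_Icc]
      tauto
end
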